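/- Let λ : S → T be a length function on a poset S and λ* the induced chain length function. For x, y ∈ S: if x ≤ y then λ*(x) ≤ λ*(y) in the lexicographic order on Ch(T). -/
import Mathlib


/-- The lexicographic order on finite chains in a poset:
`X ≤ Y` iff `min (Y \ X) ≤ min (X \ Y)`, with the convention `max ∅ < x < min ∅`. -/
def lexLE {T : Type*} [PartialOrder T] [DecidableEq T] (X Y : Finset T) : Prop :=
  X \ Y = ∅ ∨ ∃ b ∈ Y \ X, ∀ a ∈ X \ Y, b ≤ a

def lexLT {T : Type*} [PartialOrder T] [DecidableEq T] (X Y : Finset T) : Prop :=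
  lexLE X Y ∧ ¬ lexLE Y X

/-- A length function on a poset `S`: a map `l : S → T` into a poset `T` with
(L1) strict monotonicity, (L2) comparability of all values,
(L3) `{l x' | x' ≤ x}` finite for each `x`. -/
def IsLengthFunction {S T : Type*} [PartialOrder S] [PartialOrder T] (l : S → T) : Prop :=
  (∀ x y : S, x < y → l x < l y) ∧
  (∀ x y : S, l x ≤ l y ∨ l y ≤ l x) ∧
  (∀ x : S, {t : T | ∃ x' ≤ x, l x' = t}.Finite)

/-- `lstar` is the chain length function induced by `l`:
`lstar x = max {l(X) | X a finite chain in S with max X = x}`, the maximum taken in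
the lexicographic order on finite chains in `T`. -/
def IsChainLengthFunction {S T : Type*} [PartialOrder S] [PartialOrder T] [DecidableEq T]
    (l : S → T) (lstar : S → Finset T) : Prop :=
  ∀ x : S,
    (∃ X : Finset S, IsChain (· ≤ ·) (X : Set S) ∧ x ∈ X ∧ (∀ a ∈ X, a ≤ x) ∧
      lstar x = X.image l) ∧
    (∀ X : Finset S, IsChain (· ≤ ·) (X : Set S) → x ∈ X → (∀ a ∈ X, a ≤ x) →
      lexLE (X.image l) (lstar x))

lemma lexLE_of_subset_of_lexLE {T : Type*} [PartialOrder T] [DecidableEq T]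
    {A B C : Finset T} (h : A ⊆ B) (hBC : lexLE B C) : lexLE A C := by
  rcases hBC with h1 | ⟨b, hb, hball⟩
  · left
    rw [Finset.sdiff_eq_empty_iff_subset] at h1 ⊢
    exact h.trans h1
  · right
    refine ⟨b, ?_, ?_⟩
    · simp only [Finset.mem_sdiff] at hb ⊢
      exact ⟨hb.1, fun ha => hb.2 (h ha)⟩
    · intro a ha
      apply hball
      simp only [Finset.mem_sdiff] at ha ⊢
      exact ⟨h ha.1, ha.2⟩

/-- (C1): `x ≤ y` implies `λ*(x) ≤ λ*(y)` in the lexicographic order. -/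
theorem chainLengthFunction_monotone {S T : Type*} [PartialOrder S] [PartialOrder T]
    [DecidableEq T] (l : S → T) (lstar : S → Finset T)
    (hl : IsLengthFunction l) (hs : IsChainLengthFunction l lstar) :
    ∀ x y : S, x ≤ y → lexLE (lstar x) (lstar y) := by
  classical
  intro x y hxy
  obtain ⟨⟨X, hXchain, hxX, hXle, hEq⟩, _⟩ := hs x
  obtain ⟨_, hmax⟩ := hs y
  have hYchain : IsChain (· ≤ ·) ((insert y X : Finset S) : Set S) := by
    rw [Finset.coe_insert]
    exact hXchain.insert (fun b hb _ => Or.inr ((hXle b hb).trans hxy))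
  have hYle : ∀ a ∈ insert y X, a ≤ y := by
    intro a ha
    rcases Finset.mem_insert.mp ha with rfl | ha
    · exact le_refl a
    · exact (hXle a ha).trans hxy
  have h1 : lexLE ((insert y X).image l) (lstar y) :=
    hmax _ hYchain (Finset.mem_insert_self y X) hYle
  have h2 : lstar x ⊆ (insert y X).image l := by
    rw [hEq]
    exact Finset.image_subset_image (Finset.subset_insert y X)
  exact lexLE_of_subset_of_lexLE h2 h1
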